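/- Let G be a finite simple graph, let uv ∈ E(G), and let H be obtained from G by subdividing the edge uv exactly four times, with new path u, e_1, e_2, e_3, e_4, v. Then from any total dominating set D of G one can construct a total dominating set of H of size |D| + 2: if D ∩ {u,v} = ∅ add {e_2, e_3}; if u ∈ D and v ∉ D add {e_3, e_4}; if v ∈ D and u ∉ D add {e_1, e_2}; if u, v ∈ D add {e_1, e_4}. In particular, γ_t(H) ≤ γ_t(G) + 2. -/
import Mathlib


open SimpleGraph

/-- `D` is a total dominating set of `G`: every vertex has a neighbour in `D`. -/
def IsTotalDomSet {V : Type*} (G : SimpleGraph V) (D : Set V) : Prop :=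
  ∀ v : V, ∃ u ∈ D, G.Adj u v

/-- `x` and `y` are (distinct or not) at distance at most two:
adjacent or joined through a common neighbour. -/
def WithinTwo {V : Type*} (G : SimpleGraph V) (x y : V) : Prop :=
  G.Adj x y ∨ ∃ z, G.Adj x z ∧ G.Adj z y

/-- `x` and `y` are at distance exactly two. -/
def DistTwo {V : Type*} (G : SimpleGraph V) (x y : V) : Prop :=
  x ≠ y ∧ ¬ G.Adj x y ∧ ∃ z, G.Adj x z ∧ G.Adj z y

/-- `D` is a semitotal dominating set of `G`: a dominating set in which every
vertex of `D` has another vertex of `D` within distance two (a witness). -/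
def IsSemitotalDomSet {V : Type*} (G : SimpleGraph V) (D : Set V) : Prop :=
  (∀ v : V, v ∉ D → ∃ u ∈ D, G.Adj u v) ∧
  (∀ x ∈ D, ∃ y ∈ D, y ≠ x ∧ WithinTwo G x y)

/-- The total domination number `γ_t`. -/
noncomputable def totalDomNum {V : Type*} (G : SimpleGraph V) [Fintype V] : ℕ :=
  sInf {n | ∃ D : Set V, IsTotalDomSet G D ∧ D.ncard = n}

/-- The semitotal domination number `γ_{t2}`. -/
noncomputable def semitotalDomNum {V : Type*} (G : SimpleGraph V) [Fintype V] : ℕ :=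
  sInf {n | ∃ D : Set V, IsSemitotalDomSet G D ∧ D.ncard = n}

/-- The graph obtained from `G` by contracting the edge `xy`:
delete `y` and merge it into `x`. -/
def contractEdge {V : Type*} (G : SimpleGraph V) (x y : V) :
    SimpleGraph {v : V // v ≠ y} :=
  SimpleGraph.fromRel (fun a b =>
    G.Adj a.1 b.1 ∨ (a.1 = x ∧ G.Adj y b.1) ∨ (b.1 = x ∧ G.Adj y a.1))

/-- A bundled finite simple graph. -/
structure FGraph : Type 1 where
  V : Type
  fin : Fintype V
  G : SimpleGraph V

attribute [instance] FGraph.fin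

noncomputable def FGraph.tdn (A : FGraph) : ℕ := totalDomNum A.G

noncomputable def FGraph.stdn (A : FGraph) : ℕ := semitotalDomNum A.G

/-- `B` is obtained from `A` by contracting a single edge. -/
def FGraph.Contract (A B : FGraph) : Prop :=
  ∃ x y : A.V, A.G.Adj x y ∧ ∃ e : B.V ≃ {v : A.V // v ≠ y},
    ∀ a b : B.V, B.G.Adj a b ↔ (contractEdge A.G x y).Adj (e a) (e b)

/-- `B` is obtained from `A` by a sequence of `n` edge contractions. -/
inductive ContractStar : ℕ → FGraph → FGraph → Prop
  | refl (A : FGraph) : ContractStar 0 A A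
  | step {n : ℕ} {A B C : FGraph} : A.Contract B → ContractStar n B C →
      ContractStar (n + 1) A C

/-- At most `k` edge contractions suffice to decrease the total domination number by one. -/
def ctTDLe (A : FGraph) (k : ℕ) : Prop :=
  ∃ n ≤ k, ∃ B : FGraph, ContractStar n A B ∧ B.tdn = A.tdn - 1

/-- At most `k` edge contractions suffice to decrease the semitotal domination number by one. -/
def ctSTLe (A : FGraph) (k : ℕ) : Prop :=
  ∃ n ≤ k, ∃ B : FGraph, ContractStar n A B ∧ B.stdn = A.stdn - 1

/-- `ct_{γ_t}`: the minimum number of edge contractions needed to decrease `γ_t` by one. -/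
noncomputable def ctTDNum (A : FGraph) : ℕ :=
  sInf {n | ∃ B : FGraph, ContractStar n A B ∧ B.tdn = A.tdn - 1}

/-- `ct_{γ_{t2}}`: the minimum number of edge contractions needed to decrease `γ_{t2}` by one. -/
noncomputable def ctSTNum (A : FGraph) : ℕ :=
  sInf {n | ∃ B : FGraph, ContractStar n A B ∧ B.stdn = A.stdn - 1}

/-- Disjoint union of two simple graphs. -/
def disjGraphUnion {α β : Type*} (G : SimpleGraph α) (H : SimpleGraph β) :
    SimpleGraph (α ⊕ β) :=
  SimpleGraph.fromRel (fun a b =>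
    match a, b with
    | Sum.inl a, Sum.inl b => G.Adj a b
    | Sum.inr a, Sum.inr b => H.Adj a b
    | _, _ => False)

/-- The graph obtained from `G` by subdividing the edge `uv` exactly four times:
`uv` is replaced by the path `u, e₀, e₁, e₂, e₃, v`. -/
def subdivide4 {V : Type*} (G : SimpleGraph V) (u v : V) :
    SimpleGraph (V ⊕ Fin 4) :=
  SimpleGraph.fromRel (fun a b =>
    match a, b with
    | Sum.inl a, Sum.inl b => G.Adj a b ∧ ¬((a = u ∧ b = v) ∨ (a = v ∧ b = u))
    | Sum.inl a, Sum.inr i => (a = u ∧ i = 0) ∨ (a = v ∧ i = 3)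
    | Sum.inr i, Sum.inr j => (i : ℕ) + 1 = (j : ℕ)
    | _, _ => False)

/-- From any total dominating set `D` of `G`, adding the two prescribed
subdivision vertices (`{e₁,e₂}` if `D ∩ {u,v} = ∅`; `{e₂,e₃}` if only `u ∈ D`;
`{e₀,e₁}` if only `v ∈ D`; `{e₀,e₃}` if `u, v ∈ D`) yields a total dominating
set of the 4-subdivision `H` of size `|D| + 2`; in particular
`γ_t(H) ≤ γ_t(G) + 2`. -/
lemma key9 {V : Type*} [DecidableEq V] (G : SimpleGraph V)
    (u v : V) (huv : G.Adj u v) (D : Finset V) (hD : IsTotalDomSet G ↑D)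
    (E : Finset (Fin 4))
    (hE : E = if u ∈ D then (if v ∈ D then ({0, 3} : Finset (Fin 4)) else {2, 3})
          else (if v ∈ D then {0, 1} else {1, 2})) :
    IsTotalDomSet (subdivide4 G u v) ↑(D.image Sum.inl ∪ E.image Sum.inr) ∧
    (D.image Sum.inl ∪ E.image Sum.inr).card = D.card + 2 := by
  have hmemD : ∀ a ∈ D, (Sum.inl a : V ⊕ Fin 4) ∈
      (↑(D.image Sum.inl ∪ E.image Sum.inr) : Set (V ⊕ Fin 4)) := by
    intro a ha; simp [ha]
  have hmemE : ∀ i ∈ E, (Sum.inr i : V ⊕ Fin 4) ∈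
      (↑(D.image Sum.inl ∪ E.image Sum.inr) : Set (V ⊕ Fin 4)) := by
    intro i hi; simp [hi]
  constructor
  · intro x
    rcases x with a | i
    · obtain ⟨d, hd, hadj⟩ := hD a
      simp only [Finset.mem_coe] at hd
      by_cases hc : (d = u ∧ a = v) ∨ (d = v ∧ a = u)
      · rcases hc with ⟨hdu, hav⟩ | ⟨hdv, hau⟩
        · refine ⟨Sum.inr 3, hmemE 3 ?_, ?_⟩
          · subst hdu; rw [hE]; simp [hd]; split_ifs <;> simp
          · subst hav
            simp [subdivide4, SimpleGraph.fromRel_adj]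
        · refine ⟨Sum.inr 0, hmemE 0 ?_, ?_⟩
          · subst hdv; rw [hE]; simp [hd]; split_ifs <;> simp
          · subst hau
            simp [subdivide4, SimpleGraph.fromRel_adj]
      · refine ⟨Sum.inl d, hmemD d hd, ?_⟩
        simp only [subdivide4, SimpleGraph.fromRel_adj]
        exact ⟨by simp [hadj.ne], Or.inl ⟨hadj, hc⟩⟩
    · by_cases hu : u ∈ D <;> by_cases hv : v ∈ D <;>
        simp only [hu, hv, if_true, if_false] at hE <;> fin_cases i
      · exact ⟨Sum.inl u, hmemD u hu, by simp [subdivide4, SimpleGraph.fromRel_adj] <;> decide⟩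
      · exact ⟨Sum.inr 0, hmemE 0 (by rw [hE]; decide),
          by simp [subdivide4, SimpleGraph.fromRel_adj] <;> decide⟩
      · exact ⟨Sum.inr 3, hmemE 3 (by rw [hE]; decide),
          by simp [subdivide4, SimpleGraph.fromRel_adj] <;> decide⟩
      · exact ⟨Sum.inl v, hmemD v hv, by simp [subdivide4, SimpleGraph.fromRel_adj] <;> decide⟩
      · exact ⟨Sum.inl u, hmemD u hu, by simp [subdivide4, SimpleGraph.fromRel_adj] <;> decide⟩
      · exact ⟨Sum.inr 2, hmemE 2 (by rw [hE]; decide),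
          by simp [subdivide4, SimpleGraph.fromRel_adj] <;> decide⟩
      · exact ⟨Sum.inr 3, hmemE 3 (by rw [hE]; decide),
          by simp [subdivide4, SimpleGraph.fromRel_adj] <;> decide⟩
      · exact ⟨Sum.inr 2, hmemE 2 (by rw [hE]; decide),
          by simp [subdivide4, SimpleGraph.fromRel_adj] <;> decide⟩
      · exact ⟨Sum.inr 1, hmemE 1 (by rw [hE]; decide),
          by simp [subdivide4, SimpleGraph.fromRel_adj] <;> decide⟩
      · exact ⟨Sum.inr 0, hmemE 0 (by rw [hE]; decide),
          by simp [subdivide4, SimpleGraph.fromRel_adj] <;> decide⟩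
      · exact ⟨Sum.inr 1, hmemE 1 (by rw [hE]; decide),
          by simp [subdivide4, SimpleGraph.fromRel_adj] <;> decide⟩
      · exact ⟨Sum.inl v, hmemD v hv, by simp [subdivide4, SimpleGraph.fromRel_adj] <;> decide⟩
      · exact ⟨Sum.inr 1, hmemE 1 (by rw [hE]; decide),
          by simp [subdivide4, SimpleGraph.fromRel_adj] <;> decide⟩
      · exact ⟨Sum.inr 2, hmemE 2 (by rw [hE]; decide),
          by simp [subdivide4, SimpleGraph.fromRel_adj] <;> decide⟩
      · exact ⟨Sum.inr 1, hmemE 1 (by rw [hE]; decide),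
          by simp [subdivide4, SimpleGraph.fromRel_adj] <;> decide⟩
      · exact ⟨Sum.inr 2, hmemE 2 (by rw [hE]; decide),
          by simp [subdivide4, SimpleGraph.fromRel_adj] <;> decide⟩
  · have hdisj : Disjoint (D.image Sum.inl) (E.image (Sum.inr : Fin 4 → V ⊕ Fin 4)) := by
      simp [Finset.disjoint_left]
    rw [Finset.card_union_of_disjoint hdisj,
      Finset.card_image_of_injective _ Sum.inl_injective,
      Finset.card_image_of_injective _ Sum.inr_injective]
    congr 1
    rw [hE]; split_ifs <;> decide

theorem stmt9 {V : Type*} [Fintype V] [DecidableEq V] (G : SimpleGraph V)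
    (u v : V) (huv : G.Adj u v) (D : Finset V) (hD : IsTotalDomSet G ↑D)
    (E : Finset (Fin 4))
    (hE : E = if u ∈ D then (if v ∈ D then ({0, 3} : Finset (Fin 4)) else {2, 3})
          else (if v ∈ D then {0, 1} else {1, 2})) :
    IsTotalDomSet (subdivide4 G u v) ↑(D.image Sum.inl ∪ E.image Sum.inr) ∧
    (D.image Sum.inl ∪ E.image Sum.inr).card = D.card + 2 ∧
    totalDomNum (subdivide4 G u v) ≤ totalDomNum G + 2 := by
  obtain ⟨h1, h2⟩ := key9 G u v huv D hD E hE
  refine ⟨h1, h2, ?_⟩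
  have hne : (totalDomNum G) ∈ {n | ∃ D : Set V, IsTotalDomSet G D ∧ D.ncard = n} :=
    Nat.sInf_mem ⟨D.card, ↑D, hD, by simp⟩
  obtain ⟨D0, hD0, hcard0⟩ := hne
  classical
  set D0' : Finset V := D0.toFinite.toFinset with hD0'
  have hcoe : (↑D0' : Set V) = D0 := D0.toFinite.coe_toFinset
  have hD0'' : IsTotalDomSet G ↑D0' := by rw [hcoe]; exact hD0
  set E0 : Finset (Fin 4) :=
    if u ∈ D0' then (if v ∈ D0' then ({0, 3} : Finset (Fin 4)) else {2, 3})
      else (if v ∈ D0' then {0, 1} else {1, 2}) with hE0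
  obtain ⟨k1, k2⟩ := key9 G u v huv D0' hD0'' E0 hE0
  have : totalDomNum (subdivide4 G u v) ≤ D0'.card + 2 := by
    apply Nat.sInf_le
    exact ⟨↑(D0'.image Sum.inl ∪ E0.image Sum.inr), k1, by
      rw [Set.ncard_coe_finset]; exact k2⟩
  have hc : D0'.card = totalDomNum G := by
    rw [← hcard0, ← hcoe, Set.ncard_coe_finset]
  omega
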